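/- arXiv:1605.07042 — 3 statements merged into one kernel-verified Lean document; each statement's English description precedes it below -/
import Mathlib

section
/- Consider the continuous-time Markov chain on {(x₁,x₂) ∈ ℤ²_{≥0} : x₁ + 2x₂ = s} with transitions (x₁,x₂) → (x₁−2, x₂+1) at rate κ₁θ₁(x₁) and (x₁,x₂) → (x₁+2, x₂−1) at rate κ₂θ₂(x₂), where θ₁(x₁)=0 iff x₁ ≤ 1 and θ₂(x₂)=0 iff x₂=0. If (c₁,c₂) ∈ ℝ²_{>0} satisfies κ₁c₁² = κ₂c₂, then the measure π(x₁,x₂) = c₁^{x₁} c₂^{x₂} / (∏_{j=0}^{⌊x₁/2⌋−1} θ₁(x₁−2j) · ∏_{j=0}^{x₂−1} θ₂(x₂−j)) satisfies the stationarity (global balance) equations for the chain. -/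
open Finset

lemma prodpos₁ (θ₁ : ℕ → ℝ) (h0 : ∀ z, 0 ≤ θ₁ z) (h : ∀ z, θ₁ z = 0 ↔ z ≤ 1) (x : ℕ) :
    0 < ∏ j ∈ Finset.range (x / 2), θ₁ (x - 2 * j) := by
  apply Finset.prod_pos
  intro j hj
  rw [Finset.mem_range] at hj
  rcases (h0 (x - 2 * j)).lt_or_eq with hlt | heq
  · exact hlt
  · exfalso
    have := (h (x - 2 * j)).mp heq.symm
    omega

lemma prodpos₂ (θ₂ : ℕ → ℝ) (h0 : ∀ z, 0 ≤ θ₂ z) (h : ∀ z, θ₂ z = 0 ↔ z = 0) (x : ℕ) :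
    0 < ∏ j ∈ Finset.range x, θ₂ (x - j) := by
  apply Finset.prod_pos
  intro j hj
  rw [Finset.mem_range] at hj
  rcases (h0 (x - j)).lt_or_eq with hlt | heq
  · exact hlt
  · exfalso
    have := (h (x - j)).mp heq.symm
    omega

lemma step₁ (θ₁ : ℕ → ℝ) (x : ℕ) (hx : 2 ≤ x) :
    ∏ j ∈ Finset.range (x / 2), θ₁ (x - 2 * j)
      = θ₁ x * ∏ j ∈ Finset.range ((x - 2) / 2), θ₁ ((x - 2) - 2 * j) := by
  have h : x / 2 = (x - 2) / 2 + 1 := by omega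
  rw [h, Finset.prod_range_succ']
  have h1 : ∀ j : ℕ, x - 2 * (j + 1) = (x - 2) - 2 * j := by intro j; omega
  have h2 : x - 2 * 0 = x := by omega
  rw [h2, mul_comm]
  congr 1
  exact Finset.prod_congr rfl fun j _ => by rw [h1]

lemma step₂ (θ₂ : ℕ → ℝ) (x : ℕ) :
    ∏ j ∈ Finset.range (x + 1), θ₂ (x + 1 - j)
      = θ₂ (x + 1) * ∏ j ∈ Finset.range x, θ₂ (x - j) := by
  rw [Finset.prod_range_succ']
  have h1 : ∀ j : ℕ, x + 1 - (j + 1) = x - j := by intro j; omega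
  have h2 : x + 1 - 0 = x + 1 := rfl
  rw [h2, mul_comm]
  congr 1
  exact Finset.prod_congr rfl fun j _ => by rw [h1]

theorem stmt_3 (κ₁ κ₂ : ℝ) (hκ₁ : 0 < κ₁) (hκ₂ : 0 < κ₂)
    (θ₁ θ₂ : ℕ → ℝ) (hθ₁_nonneg : ∀ z, 0 ≤ θ₁ z) (hθ₂_nonneg : ∀ z, 0 ≤ θ₂ z)
    (hθ₁ : ∀ z, θ₁ z = 0 ↔ z ≤ 1) (hθ₂ : ∀ z, θ₂ z = 0 ↔ z = 0)
    (c₁ c₂ : ℝ) (hc₁ : 0 < c₁) (hc₂ : 0 < c₂) (hcb : κ₁ * c₁ ^ 2 = κ₂ * c₂)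
    (s : ℕ)
    (π : ℕ → ℕ → ℝ)
    (hπ : ∀ x₁ x₂, π x₁ x₂ = c₁ ^ x₁ * c₂ ^ x₂ /
      ((∏ j ∈ Finset.range (x₁ / 2), θ₁ (x₁ - 2 * j)) *
       (∏ j ∈ Finset.range x₂, θ₂ (x₂ - j)))) :
    ∀ x₁ x₂ : ℕ, x₁ + 2 * x₂ = s →
      κ₁ * θ₁ (x₁ + 2) * π (x₁ + 2) (x₂ - 1) * (if 1 ≤ x₂ then 1 else 0) +
        κ₂ * θ₂ (x₂ + 1) * π (x₁ - 2) (x₂ + 1) * (if 2 ≤ x₁ then 1 else 0) =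
      (κ₁ * θ₁ x₁ + κ₂ * θ₂ x₂) * π x₁ x₂ := by
  intro x₁ x₂ _
  have hP₁ := prodpos₁ θ₁ hθ₁_nonneg hθ₁
  have hP₂ := prodpos₂ θ₂ hθ₂_nonneg hθ₂
  have E1 : κ₁ * θ₁ (x₁ + 2) * π (x₁ + 2) (x₂ - 1) * (if 1 ≤ x₂ then 1 else 0)
      = κ₂ * θ₂ x₂ * π x₁ x₂ := by
    rcases x₂ with _ | m
    · simp [(hθ₂ 0).mpr rfl]
    · have hind : (if 1 ≤ m + 1 then (1:ℝ) else 0) = 1 := by simp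
      have ha : 0 < θ₁ (x₁ + 2) := by
        rcases (hθ₁_nonneg (x₁ + 2)).lt_or_eq with hlt | heq
        · exact hlt
        · exact absurd ((hθ₁ (x₁ + 2)).mp heq.symm) (by omega)
      have hb : 0 < θ₂ (m + 1) := by
        rcases (hθ₂_nonneg (m + 1)).lt_or_eq with hlt | heq
        · exact hlt
        · exact absurd ((hθ₂ (m + 1)).mp heq.symm) (by omega)
      have hs1 := step₁ θ₁ (x₁ + 2) (by omega)
      have hs2 := step₂ θ₂ m
      simp only [Nat.add_sub_cancel] at hs1 ⊢
      rw [hind, hπ, hπ, hs1, hs2, mul_one]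
      have hp := hP₁ x₁
      have hq := hP₂ m
      field_simp
      linear_combination (c₁ ^ x₁ * c₂ ^ m) * hcb
  have E2 : κ₂ * θ₂ (x₂ + 1) * π (x₁ - 2) (x₂ + 1) * (if 2 ≤ x₁ then 1 else 0)
      = κ₁ * θ₁ x₁ * π x₁ x₂ := by
    by_cases hx : 2 ≤ x₁
    · have hind : (if 2 ≤ x₁ then (1:ℝ) else 0) = 1 := by simp [hx]
      have ha : 0 < θ₁ x₁ := by
        rcases (hθ₁_nonneg x₁).lt_or_eq with hlt | heq
        · exact hlt
        · exact absurd ((hθ₁ x₁).mp heq.symm) (by omega)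
      have hb : 0 < θ₂ (x₂ + 1) := by
        rcases (hθ₂_nonneg (x₂ + 1)).lt_or_eq with hlt | heq
        · exact hlt
        · exact absurd ((hθ₂ (x₂ + 1)).mp heq.symm) (by omega)
      have hs1 := step₁ θ₁ x₁ hx
      have hs2 := step₂ θ₂ x₂
      rw [hind, hπ, hπ, hs1, hs2, mul_one]
      have hp := hP₁ (x₁ - 2)
      have hq := hP₂ x₂
      have hx1 : c₁ ^ x₁ = c₁ ^ (x₁ - 2) * c₁ ^ 2 := by
        rw [← pow_add]; congr 1; omega
      rw [hx1]
      field_simp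
      linear_combination (-(c₂ ^ x₂)) * hcb
    · have h0 : θ₁ x₁ = 0 := (hθ₁ x₁).mpr (by omega)
      simp [hx, h0]
  rw [E1, E2]
  ring
end

section
/- Consider the continuous-time Markov chain on ℤ²_{≥0} with transitions: (x₁,x₂)→(x₁−2,x₂) at rate κ₁θ(x₁), (x₁,x₂)→(x₁+2,x₂) at rate κ₂, (x₁,x₂)→(x₁−1,x₂+1) at rate κ₃φ(x₁), (x₁,x₂)→(x₁+1,x₂−1) at rate κ₄x₂, where θ(z)=0 iff z≤1, φ(0)=0, φ(1)=C>0, and φ(n)φ(n−1)=θ(n) for n≥2. If c₁ = √(κ₂/κ₁) and c₂ = (κ₃/κ₄)c₁, then π(x₁,x₂) = c₁^{x₁}/(∏_{j=1}^{x₁}φ(j)) · c₂^{x₂}/x₂! satisfies the global balance equations for this chain. -/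
open Finset

theorem stmt_8 (κ₁ κ₂ κ₃ κ₄ C : ℝ)
    (hκ₁ : 0 < κ₁) (hκ₂ : 0 < κ₂) (hκ₃ : 0 < κ₃) (hκ₄ : 0 < κ₄) (hC : 0 < C)
    (θ : ℕ → ℝ) (hθ_nonneg : ∀ z, 0 ≤ θ z) (hθ : ∀ z, θ z = 0 ↔ z ≤ 1)
    (φ : ℕ → ℝ) (hφ0 : φ 0 = 0) (hφ1 : φ 1 = C)
    (hφrec : ∀ n, 2 ≤ n → φ n * φ (n - 1) = θ n)
    (c₁ c₂ : ℝ) (hc₁ : c₁ = Real.sqrt (κ₂ / κ₁)) (hc₂ : c₂ = (κ₃ / κ₄) * c₁)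
    (π : ℕ → ℕ → ℝ)
    (hπ : ∀ x₁ x₂, π x₁ x₂ =
      c₁ ^ x₁ / (∏ j ∈ Finset.Icc 1 x₁, φ j) * (c₂ ^ x₂ / (Nat.factorial x₂))) :
    ∀ x₁ x₂ : ℕ,
      κ₁ * θ (x₁ + 2) * π (x₁ + 2) x₂ +
        κ₂ * π (x₁ - 2) x₂ * (if 2 ≤ x₁ then 1 else 0) +
        κ₃ * φ (x₁ + 1) * π (x₁ + 1) (x₂ - 1) * (if 1 ≤ x₂ then 1 else 0) +
        κ₄ * (x₂ + 1) * π (x₁ - 1) (x₂ + 1) * (if 1 ≤ x₁ then 1 else 0) =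
      (κ₁ * θ x₁ + κ₂ + κ₃ * φ x₁ + κ₄ * x₂) * π x₁ x₂ := by
  have hθpos : ∀ n, 2 ≤ n → 0 < θ n := fun n hn =>
    lt_of_le_of_ne (hθ_nonneg n) (fun h => by have := (hθ n).mp h.symm; omega)
  have hφpos : ∀ n, 1 ≤ n → 0 < φ n := by
    intro n hn
    induction n with
    | zero => omega
    | succ m ih =>
      rcases Nat.eq_zero_or_pos m with hm | hm
      · subst hm; simpa [hφ1] using hC
      · have hrec := hφrec (m + 1) (by omega)
        simp only [Nat.add_sub_cancel] at hrec
        have hφm := ih hm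
        have hθp := hθpos (m + 1) (by omega)
        have : φ (m + 1) = θ (m + 1) / φ m := by
          rw [← hrec]; field_simp
        rw [this]; positivity
  have hφne : ∀ n, 1 ≤ n → φ n ≠ 0 := fun n hn => (hφpos n hn).ne'
  have hc₁pos : 0 < c₁ := by
    rw [hc₁]; exact Real.sqrt_pos.mpr (by positivity)
  have hc₂pos : 0 < c₂ := by rw [hc₂]; positivity
  have hsq : κ₁ * c₁ ^ 2 = κ₂ := by
    rw [hc₁, Real.sq_sqrt (by positivity : (0:ℝ) ≤ κ₂ / κ₁)]
    field_simp
  have hc₂' : κ₄ * c₂ = κ₃ * c₁ := by rw [hc₂]; field_simp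
  have hPpos : ∀ m : ℕ, 0 < ∏ j ∈ Finset.Icc 1 m, φ j := by
    intro m
    exact Finset.prod_pos fun j hj => hφpos j (Finset.mem_Icc.mp hj).1
  have hPne : ∀ m : ℕ, (∏ j ∈ Finset.Icc 1 m, φ j) ≠ 0 := fun m => (hPpos m).ne'
  have hfac : ∀ m : ℕ, ((Nat.factorial m : ℝ)) ≠ 0 := fun m => by
    exact_mod_cast (Nat.factorial_pos m).ne'
  -- key pair 1/2 : κ₁ θ(y₁+2) π(y₁+2,y₂) = κ₂ π(y₁,y₂)
  have key1 : ∀ y₁ y₂ : ℕ, κ₁ * θ (y₁ + 2) * π (y₁ + 2) y₂ = κ₂ * π y₁ y₂ := by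
    intro y₁ y₂
    have hθ2 : θ (y₁ + 2) = φ (y₁ + 2) * φ (y₁ + 1) := by
      have := hφrec (y₁ + 2) (by omega)
      simpa using this.symm
    have hprod : (∏ j ∈ Finset.Icc 1 (y₁ + 2), φ j)
        = (∏ j ∈ Finset.Icc 1 y₁, φ j) * φ (y₁ + 1) * φ (y₁ + 2) := by
      rw [Finset.prod_Icc_succ_top (by omega), Finset.prod_Icc_succ_top (by omega)]
    rw [hπ, hπ, hθ2, hprod]
    have h1 := hφne (y₁ + 1) (by omega)
    have h2 := hφne (y₁ + 2) (by omega)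
    have hP := hPne y₁
    have hf := hfac y₂
    field_simp
    ring_nf
    linear_combination (c₁ ^ y₁) * hsq
  -- key pair 3/4 : κ₃ φ(y₁+1) π(y₁+1,y₂) = κ₄ (y₂+1) π(y₁,y₂+1)
  have key2 : ∀ y₁ y₂ : ℕ,
      κ₃ * φ (y₁ + 1) * π (y₁ + 1) y₂ = κ₄ * (y₂ + 1) * π y₁ (y₂ + 1) := by
    intro y₁ y₂
    have hprod : (∏ j ∈ Finset.Icc 1 (y₁ + 1), φ j)
        = (∏ j ∈ Finset.Icc 1 y₁, φ j) * φ (y₁ + 1) := by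
      rw [Finset.prod_Icc_succ_top (by omega)]
    rw [hπ, hπ, hprod]
    have h1 := hφne (y₁ + 1) (by omega)
    have hP := hPne y₁
    have hf := hfac y₂
    have hfacsucc : ((Nat.factorial (y₂ + 1) : ℝ)) = (y₂ + 1) * Nat.factorial y₂ := by
      push_cast [Nat.factorial_succ]; ring
    rw [hfacsucc]
    field_simp
    ring_nf
    linear_combination -(c₁ ^ y₁ * c₂ ^ y₂) * hc₂'
  intro x₁ x₂
  have h1 : κ₁ * θ (x₁ + 2) * π (x₁ + 2) x₂ = κ₂ * π x₁ x₂ := key1 x₁ x₂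
  have h2 : κ₂ * π (x₁ - 2) x₂ * (if 2 ≤ x₁ then 1 else 0) = κ₁ * θ x₁ * π x₁ x₂ := by
    by_cases hx : 2 ≤ x₁
    · obtain ⟨m, rfl⟩ : ∃ m, x₁ = m + 2 := ⟨x₁ - 2, by omega⟩
      simp only [hx, if_pos, Nat.add_sub_cancel, mul_one]
      exact (key1 m x₂).symm
    · have : θ x₁ = 0 := (hθ x₁).mpr (by omega)
      simp [hx, this]
  have h3 : κ₃ * φ (x₁ + 1) * π (x₁ + 1) (x₂ - 1) * (if 1 ≤ x₂ then 1 else 0)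
      = κ₄ * x₂ * π x₁ x₂ := by
    by_cases hx : 1 ≤ x₂
    · obtain ⟨m, rfl⟩ : ∃ m, x₂ = m + 1 := ⟨x₂ - 1, by omega⟩
      simp only [hx, if_pos, Nat.add_sub_cancel, mul_one]
      have := key2 x₁ m
      push_cast
      push_cast at this
      linarith
    · have : x₂ = 0 := by omega
      simp [hx, this]
  have h4 : κ₄ * (x₂ + 1) * π (x₁ - 1) (x₂ + 1) * (if 1 ≤ x₁ then 1 else 0)
      = κ₃ * φ x₁ * π x₁ x₂ := by
    by_cases hx : 1 ≤ x₁
    · obtain ⟨m, rfl⟩ : ∃ m, x₁ = m + 1 := ⟨x₁ - 1, by omega⟩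
      simp only [hx, if_pos, Nat.add_sub_cancel, mul_one]
      exact (key2 m x₂).symm
    · have : x₁ = 0 := by omega
      simp [hx, this, hφ0]
  rw [add_mul, add_mul, add_mul]
  linarith
end

section
/- Generalized product-form theorem: let α_i ≥ 1 be integers dividing ν_{ki} for all reactions k, and let θ_i : ℕ → ℝ≥0 satisfy θ_i(z) = 0 iff z ≤ α_i − 1. Set λ_k(x) = κ_k ∏_i ∏_{j=0}^{ν_{ki}/α_i − 1} θ_i(x_i − jα_i), κ_k > 0. If c ∈ ℝ^d_{>0} is a complex-balanced equilibrium of the associated mass-action ODE, then π(x) = ∏_i c_i^{x_i}/∏_{j=0}^{⌊x_i/α_i⌋ − 1} θ_i(x_i − jα_i) satisfies the global balance equations ∑_k λ_k(x − ν'_k + ν_k)π(x − ν'_k + ν_k)𝟙{x − ν'_k + ν_k ≥ 0} = ∑_k λ_k(x)π(x) for all x ∈ ℤ^d_{≥0}. -/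
open Finset

/-- Per-coordinate zero lemma: if `x < m * α` then the λ-factor vanishes. -/
lemma coord_zero' (θ : ℕ → ℝ) (α m x : ℕ)
    (hθ : ∀ z, θ z = 0 ↔ z ≤ α - 1) (hx : x < m * α) :
    ∏ j ∈ Finset.range m, θ (x - j * α) = 0 := by
  have hm : 1 ≤ m := by
    rcases Nat.eq_zero_or_pos m with h | h
    · subst h; simp at hx
    · exact h
  apply Finset.prod_eq_zero (Finset.mem_range.2 (show m - 1 < m by omega))
  rw [hθ]
  have h1 : (m - 1) * α + α = m * α := by
    rcases m with _ | m'
    · omega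
    · simp [Nat.succ_sub_one, Nat.succ_mul]
  omega

/-- Per-coordinate key identity. -/
lemma coord_eq' (θ : ℕ → ℝ) (α m x : ℕ) (c : ℝ) (hα : 1 ≤ α)
    (hθ : ∀ z, θ z = 0 ↔ z ≤ α - 1) (hx : m * α ≤ x) :
    (∏ j ∈ Finset.range m, θ (x - j * α)) *
      (c ^ x / ∏ j ∈ Finset.range (x / α), θ (x - j * α)) =
    c ^ (m * α) *
      (c ^ (x - m * α) /
        ∏ j ∈ Finset.range ((x - m * α) / α), θ (x - m * α - j * α)) := by
  have hPne : ∀ j ∈ Finset.range m, θ (x - j * α) ≠ 0 := by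
    intro j hj
    rw [Finset.mem_range] at hj
    have h1 : (j + 1) * α ≤ m * α := Nat.mul_le_mul_right α (by omega)
    have h2 : (j + 1) * α = j * α + α := by ring
    rw [Ne, hθ]
    omega
  have hP : (∏ j ∈ Finset.range m, θ (x - j * α)) ≠ 0 :=
    Finset.prod_ne_zero_iff.2 hPne
  have hdiv : x / α = m + (x - m * α) / α := by
    conv_lhs => rw [show x = x - m * α + m * α by omega]
    rw [Nat.add_mul_div_right _ _ (show 0 < α by omega)]
    exact Nat.add_comm _ _
  rw [hdiv, Finset.prod_range_add]
  have hshift : ∀ j, θ (x - (m + j) * α) = θ (x - m * α - j * α) := by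
    intro j
    congr 1
    have : (m + j) * α = m * α + j * α := by ring
    omega
  simp only [hshift]
  have hcx : c ^ (m * α) * c ^ (x - m * α) = c ^ x := by
    rw [← pow_add]; congr 1; omega
  set P := ∏ j ∈ Finset.range m, θ (x - j * α)
  set Q := ∏ j ∈ Finset.range ((x - m * α) / α), θ (x - m * α - j * α)
  rcases eq_or_ne Q 0 with hQ | hQ
  · simp [hQ]
  · field_simp
    rw [← hcx]

theorem stmt_10 (d K : ℕ) (hd : 1 ≤ d)
    (ν ν' : Fin K → Fin d → ℕ)
    (α : Fin d → ℕ) (hα : ∀ i, 1 ≤ α i) (hdvd : ∀ k i, α i ∣ ν k i)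
    (κ : Fin K → ℝ) (hκ : ∀ k, 0 < κ k)
    (θ : Fin d → ℕ → ℝ) (hθ_nonneg : ∀ i z, 0 ≤ θ i z)
    (hθ_zero : ∀ i z, θ i z = 0 ↔ z ≤ α i - 1)
    (c : Fin d → ℝ) (hc : ∀ i, 0 < c i)
    (hcb : ∀ η : Fin d → ℕ,
      ∑ k ∈ Finset.univ.filter (fun k => ν k = η), κ k * ∏ i, c i ^ ν k i =
      ∑ k ∈ Finset.univ.filter (fun k => ν' k = η), κ k * ∏ i, c i ^ ν k i)
    (lam : (Fin d → ℕ) → Fin K → ℝ)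
    (hlam : ∀ z k, lam z k =
      κ k * ∏ i, ∏ j ∈ Finset.range (ν k i / α i), θ i (z i - j * α i))
    (π : (Fin d → ℕ) → ℝ)
    (hπ : ∀ z, π z = ∏ i, c i ^ z i /
      ∏ j ∈ Finset.range (z i / α i), θ i (z i - j * α i)) :
    ∀ x : Fin d → ℕ,
      (∑ k, if ∀ i, ν' k i ≤ x i + ν k i then
          lam (fun i => x i + ν k i - ν' k i) k * π (fun i => x i + ν k i - ν' k i)
        else 0) =
      ∑ k, lam x k * π x := by
  intro x
  -- the key pointwise identity
  have key : ∀ (z : Fin d → ℕ) (k : Fin K), lam z k * π z =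
      κ k * (∏ i, c i ^ ν k i) *
        (if ∀ i, ν k i ≤ z i then
          ∏ i, (c i ^ (z i - ν k i) /
            ∏ j ∈ Finset.range ((z i - ν k i) / α i), θ i (z i - ν k i - j * α i))
        else 0) := by
    intro z k
    rw [hlam, hπ]
    split_ifs with h
    · rw [mul_assoc, ← Finset.prod_mul_distrib, mul_assoc, ← Finset.prod_mul_distrib]
      congr 1
      apply Finset.prod_congr rfl
      intro i _
      have hm : ν k i / α i * α i = ν k i := Nat.div_mul_cancel (hdvd k i)
      have hh := coord_eq' (θ i) (α i) (ν k i / α i) (z i) (c i) (hα i)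
        (hθ_zero i) (by rw [hm]; exact h i)
      rw [hm] at hh
      exact hh
    · push_neg at h
      obtain ⟨i₀, hi₀⟩ := h
      have hz : ∏ j ∈ Finset.range (ν k i₀ / α i₀), θ i₀ (z i₀ - j * α i₀) = 0 :=
        coord_zero' (θ i₀) (α i₀) _ _ (hθ_zero i₀)
          (by rw [Nat.div_mul_cancel (hdvd k i₀)]; omega)
      have hz2 : (∏ i, ∏ j ∈ Finset.range (ν k i / α i), θ i (z i - j * α i)) = 0 :=
        Finset.prod_eq_zero (Finset.mem_univ i₀) hz
      rw [hz2]
      ring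
  set g : (Fin d → ℕ) → ℝ := fun η =>
    if ∀ i, η i ≤ x i then
      ∏ i, (c i ^ (x i - η i) /
        ∏ j ∈ Finset.range ((x i - η i) / α i), θ i (x i - η i - j * α i))
    else 0 with hg
  have keyR : ∀ k, lam x k * π x = κ k * (∏ i, c i ^ ν k i) * g (ν k) := by
    intro k
    rw [key x k, hg]
  have keyL : ∀ k, (if ∀ i, ν' k i ≤ x i + ν k i then
        lam (fun i => x i + ν k i - ν' k i) k * π (fun i => x i + ν k i - ν' k i)
      else 0) = κ k * (∏ i, c i ^ ν k i) * g (ν' k) := by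
    intro k
    by_cases hx' : ∀ i, ν' k i ≤ x i
    · rw [if_pos (fun i => le_trans (hx' i) (Nat.le_add_right _ _)), key]
      have hcond : ∀ i, ν k i ≤ x i + ν k i - ν' k i := fun i => by
        have := hx' i; omega
      rw [if_pos hcond, hg]
      simp only [if_pos hx']
      congr 1
      apply Finset.prod_congr rfl
      intro i _
      have h1 : x i + ν k i - ν' k i - ν k i = x i - ν' k i := by
        have := hx' i; omega
      rw [h1]
    · have hgz : g (ν' k) = 0 := by rw [hg]; exact if_neg hx'
      rw [hgz, mul_zero]
      split_ifs with hout
      · rw [key]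
        push_neg at hx'
        obtain ⟨i₀, h0⟩ := hx'
        rw [if_neg, mul_zero]
        intro hall
        have h1 := hall i₀
        have h2 := hout i₀
        omega
      · rfl
  rw [Finset.sum_congr rfl (fun k _ => keyL k),
    Finset.sum_congr rfl (fun k _ => keyR k)]
  -- group by complexes
  classical
  set S : Finset (Fin d → ℕ) :=
    (Finset.univ.image ν) ∪ (Finset.univ.image ν') with hS
  have hmem : ∀ k : Fin K, ν k ∈ S := fun k => by
    simp [hS, Finset.mem_union, Finset.mem_image]
  have hmem' : ∀ k : Fin K, ν' k ∈ S := fun k => by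
    simp [hS, Finset.mem_union, Finset.mem_image]
  have hfib : ∀ (w : Fin K → Fin d → ℕ), (∀ k : Fin K, w k ∈ S) →
      (∑ k, κ k * (∏ i, c i ^ ν k i) * g (w k)) =
      ∑ η ∈ S, (∑ k ∈ Finset.univ.filter (fun k => w k = η),
        κ k * ∏ i, c i ^ ν k i) * g η := by
    intro w hw
    rw [← Finset.sum_fiberwise_of_maps_to (fun k _ => hw k)
      (fun k => κ k * (∏ i, c i ^ ν k i) * g (w k))]
    apply Finset.sum_congr rfl
    intro η _
    rw [Finset.sum_mul]
    apply Finset.sum_congr rfl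
    intro k hk
    rw [Finset.mem_filter] at hk
    rw [hk.2]
  rw [hfib ν' hmem', hfib ν hmem]
  apply Finset.sum_congr rfl
  intro η _
  rw [hcb η]
end
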